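/- arXiv:2102.00556 — 2 statements merged into one kernel-verified Lean document; each statement's English description precedes it below -/
import Mathlib

section
/- Monotonicity of the LS curve under a doubly stochastic matrix: if M is doubly stochastic and p is a nonnegative vector, then for all x ∈ [0,n], I(Mp, x) ≤ I(p, x), where I is the Lovász–Simonovits curve. -/
open Matrix

/-- The Lovász–Simonovits curve of a nonnegative vector `p`:
`I(p, x) = max { Σ_u p(u) w(u) : w ∈ [0,1]^n, Σ_u w(u) = x }`. -/
noncomputable def LScurve {n : ℕ} (p : Fin n → ℝ) (x : ℝ) : ℝ :=
  sSup {s | ∃ w : Fin n → ℝ, (∀ i, w i ∈ Set.Icc (0 : ℝ) 1) ∧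
    (∑ i, w i) = x ∧ s = ∑ i, p i * w i}

/-- Applying a doubly stochastic matrix does not increase the LS curve:
`I(Mp, x) ≤ I(p, x)` for all `x ∈ [0, n]`. -/
theorem LScurve_mulVec_le {n : ℕ} (M : Matrix (Fin n) (Fin n) ℝ)
    (hnn : ∀ u v, 0 ≤ M u v) (hrow : ∀ u, ∑ v, M u v = 1)
    (hcol : ∀ v, ∑ u, M u v = 1)
    (p : Fin n → ℝ) (hp : ∀ i, 0 ≤ p i) :
    ∀ x ∈ Set.Icc (0 : ℝ) n, LScurve (M.mulVec p) x ≤ LScurve p x := by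
  intro x hx
  unfold LScurve
  apply csSup_le_csSup
  · -- bounded above by ∑ p i
    refine ⟨∑ i, p i, ?_⟩
    rintro s ⟨w, hw, hsum, rfl⟩
    calc ∑ i, p i * w i ≤ ∑ i, p i * 1 := by
          apply Finset.sum_le_sum
          intro i _
          exact mul_le_mul_of_nonneg_left (hw i).2 (hp i)
      _ = ∑ i, p i := by simp
  · -- nonempty: witness w i = x / n
    rcases Nat.eq_zero_or_pos n with h0 | hpos
    · subst h0
      refine ⟨0, fun i => i.elim0, ?_, ?_⟩ <;> simp_all
    · have hn : (0:ℝ) < n := by exact_mod_cast hpos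
      refine ⟨∑ i, M.mulVec p i * (x / n), fun _ => x / n, fun i => ?_, ?_, rfl⟩
      · constructor
        · exact div_nonneg hx.1 hn.le
        · rw [div_le_one hn]; exact hx.2
      · rw [Finset.sum_const, Finset.card_univ, Fintype.card_fin, nsmul_eq_mul]
        field_simp
  · -- subset
    rintro s ⟨w, hw, hsum, rfl⟩
    refine ⟨fun v => ∑ u, M u v * w u, fun v => ?_, ?_, ?_⟩
    · constructor
      · exact Finset.sum_nonneg fun u _ => mul_nonneg (hnn u v) (hw u).1
      · calc ∑ u, M u v * w u ≤ ∑ u, M u v * 1 :=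
              Finset.sum_le_sum fun u _ =>
                mul_le_mul_of_nonneg_left (hw u).2 (hnn u v)
          _ = 1 := by simpa using hcol v
    · rw [Finset.sum_comm]
      calc ∑ u, ∑ v, M u v * w u = ∑ u, (∑ v, M u v) * w u := by
            simp [Finset.sum_mul]
        _ = x := by simp only [hrow, one_mul]; exact hsum
    · simp only [Matrix.mulVec, dotProduct, Finset.sum_mul, Finset.mul_sum]
      rw [Finset.sum_comm]
      apply Finset.sum_congr rfl
      intro v _
      apply Finset.sum_congr rfl
      intro u _
      ring
end

section
/- Conductance of enlarged level sets: let S ⊆ T be vertex sets in a graph of max degree d with |T| ≤ |S|(1 + ψ/2) for some ψ ∈ (0,1], and suppose the cut E(S,S̄) ≥ ψ·d|S|. Then the conductance-type ratio E(T,T̄)/(d|T|) ≥ ψ/4. -/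
/-- Number of edges of `G` with exactly one endpoint in `S`. -/
def cutEdges {n : ℕ} (G : SimpleGraph (Fin n)) [DecidableRel G.Adj]
    (S : Finset (Fin n)) : ℕ :=
  ((S ×ˢ Sᶜ).filter fun p => G.Adj p.1 p.2).card

lemma cut_bound {n d : ℕ} (G : SimpleGraph (Fin n)) [DecidableRel G.Adj]
    (hd : ∀ v, G.degree v ≤ d) (S X : Finset (Fin n)) :
    (((S ×ˢ X).filter fun p => G.Adj p.1 p.2).card) ≤ d * X.card := by
  classical
  have hsub : ((S ×ˢ X).filter fun p => G.Adj p.1 p.2) ⊆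
      X.biUnion (fun v => (G.neighborFinset v).image (fun u => (u, v))) := by
    intro p hp
    simp only [Finset.mem_filter, Finset.mem_product] at hp
    refine Finset.mem_biUnion.2 ⟨p.2, hp.1.2, ?_⟩
    refine Finset.mem_image.2 ⟨p.1, ?_, rfl⟩
    simpa [SimpleGraph.mem_neighborFinset] using hp.2.symm
  calc _ ≤ (X.biUnion (fun v => (G.neighborFinset v).image (fun u => (u, v)))).card :=
        Finset.card_le_card hsub
    _ ≤ ∑ v ∈ X, ((G.neighborFinset v).image (fun u => (u, v))).card :=
        Finset.card_biUnion_le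
    _ ≤ ∑ v ∈ X, d := by
        refine Finset.sum_le_sum fun v _ => ?_
        exact (Finset.card_image_le).trans (hd v)
    _ = d * X.card := by rw [Finset.sum_const, smul_eq_mul, mul_comm]

lemma cut_mono {n d : ℕ} (G : SimpleGraph (Fin n)) [DecidableRel G.Adj]
    (hd : ∀ v, G.degree v ≤ d) (S T : Finset (Fin n)) (hST : S ⊆ T) :
    cutEdges G S ≤ cutEdges G T + d * (T \ S).card := by
  classical
  have hsub : ((S ×ˢ Sᶜ).filter fun p => G.Adj p.1 p.2) ⊆
      ((T ×ˢ Tᶜ).filter fun p => G.Adj p.1 p.2) ∪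
      ((S ×ˢ (T \ S)).filter fun p => G.Adj p.1 p.2) := by
    intro p hp
    simp only [Finset.mem_filter, Finset.mem_product, Finset.mem_compl] at hp
    by_cases h2 : p.2 ∈ T
    · refine Finset.mem_union_right _ ?_
      simp only [Finset.mem_filter, Finset.mem_product, Finset.mem_sdiff]
      exact ⟨⟨hp.1.1, h2, hp.1.2⟩, hp.2⟩
    · refine Finset.mem_union_left _ ?_
      simp only [Finset.mem_filter, Finset.mem_product, Finset.mem_compl]
      exact ⟨⟨hST hp.1.1, h2⟩, hp.2⟩
  calc cutEdges G S ≤ _ := Finset.card_le_card hsub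
    _ ≤ ((T ×ˢ Tᶜ).filter fun p => G.Adj p.1 p.2).card +
        ((S ×ˢ (T \ S)).filter fun p => G.Adj p.1 p.2).card := Finset.card_union_le _ _
    _ ≤ cutEdges G T + d * (T \ S).card := by
        exact Nat.add_le_add_left (cut_bound G hd S (T \ S)) _

/-- Conductance of enlarged level sets: if `S ⊆ T`, `|T| ≤ (1 + ψ/2)|S|`, and
`E(S,S̄) ≥ ψ·d·|S|` in a graph of max degree `d`, then
`E(T,T̄)/(d|T|) ≥ ψ/4`. -/
theorem conductance_enlarged_set {n d : ℕ} (G : SimpleGraph (Fin n))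
    [DecidableRel G.Adj] (hd0 : 0 < d) (hd : ∀ v, G.degree v ≤ d)
    (S T : Finset (Fin n)) (hS : S.Nonempty) (hST : S ⊆ T)
    (ψ : ℝ) (hψ0 : 0 < ψ) (hψ1 : ψ ≤ 1)
    (hT : (T.card : ℝ) ≤ (1 + ψ / 2) * S.card)
    (hcut : ψ * d * S.card ≤ (cutEdges G S : ℝ)) :
    ψ / 4 ≤ (cutEdges G T : ℝ) / (d * T.card) := by
  have hmono := cut_mono G hd S T hST
  have hsd : ((T \ S).card : ℝ) = (T.card : ℝ) - S.card := by
    rw [Finset.card_sdiff_of_subset hST]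
    have := Finset.card_le_card hST
    push_cast [Nat.cast_sub this]
    ring
  have hmonoR : (cutEdges G S : ℝ) ≤ (cutEdges G T : ℝ) + d * ((T.card : ℝ) - S.card) := by
    rw [← hsd]
    exact_mod_cast hmono
  have hScard : (0:ℝ) < S.card := by exact_mod_cast Finset.card_pos.2 hS
  have hTcard : (0:ℝ) < T.card := by
    exact_mod_cast Finset.card_pos.2 (hS.mono hST)
  have hdR : (0:ℝ) < d := by exact_mod_cast hd0
  rw [le_div_iff₀ (by positivity)]
  -- ψ/4 * (d * |T|) ≤ cutT
  nlinarith [mul_pos hdR hScard, mul_pos hψ0 (mul_pos hdR hScard)]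
end
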